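/- Let b, c, x₃ be complex numbers with bc ≠ 0. The 9×9 matrix given in block form [1], [[1−bc, b],[c, 0]], [[1−bc, 0, b/c],[−x₃c², 1, x₃],[c², 0, 0]], [[1−bc, b],[c, 0]], [1] satisfies the braid relation R̂₁R̂₂R̂₁ = R̂₂R̂₁R̂₂. -/
import Mathlib


open Matrix Polynomial

noncomputable section

/-- `R̂ ⊗ 1` acting on `V ⊗ V ⊗ V` with `V = ℂ^3`. -/
def R1 (R : Matrix (Fin 3 × Fin 3) (Fin 3 × Fin 3) ℂ) :
    Matrix (Fin 3 × Fin 3 × Fin 3) (Fin 3 × Fin 3 × Fin 3) ℂ :=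
  fun p q => R (p.1, p.2.1) (q.1, q.2.1) * (if p.2.2 = q.2.2 then 1 else 0)

/-- `1 ⊗ R̂` acting on `V ⊗ V ⊗ V` with `V = ℂ^3`. -/
def R2 (R : Matrix (Fin 3 × Fin 3) (Fin 3 × Fin 3) ℂ) :
    Matrix (Fin 3 × Fin 3 × Fin 3) (Fin 3 × Fin 3 × Fin 3) ℂ :=
  fun p q => (if p.1 = q.1 then 1 else 0) * R (p.2.1, p.2.2) (q.2.1, q.2.2)

/-- The braid relation `R̂₁R̂₂R̂₁ = R̂₂R̂₁R̂₂`. -/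
def Braid (R : Matrix (Fin 3 × Fin 3) (Fin 3 × Fin 3) ℂ) : Prop :=
  R1 R * R2 R * R1 R = R2 R * R1 R * R2 R

/-- position within the charge-1 sector: |10⟩, |01⟩. -/
def f1 (p : Fin 3 × Fin 3) : Fin 2 := if p = (1, 0) then 0 else 1

/-- position within the charge-2 sector: |20⟩, |11⟩, |02⟩. -/
def f2 (p : Fin 3 × Fin 3) : Fin 3 := if p = (2, 0) then 0 else if p = (1, 1) then 1 else 2

/-- position within the charge-3 sector: |21⟩, |12⟩. -/
def f3 (p : Fin 3 × Fin 3) : Fin 2 := if p = (2, 1) then 0 else 1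

/-- The 9×9 matrix with blocks of sizes 1,2,3,2,1 on the graded basis
|00⟩,|10⟩,|01⟩,|20⟩,|11⟩,|02⟩,|21⟩,|12⟩,|22⟩. -/
def blockR (b0 : ℂ) (B1 : Matrix (Fin 2) (Fin 2) ℂ) (B2 : Matrix (Fin 3) (Fin 3) ℂ)
    (B3 : Matrix (Fin 2) (Fin 2) ℂ) (b4 : ℂ) : Matrix (Fin 3 × Fin 3) (Fin 3 × Fin 3) ℂ :=
  fun p q =>
    if (p.1 : ℕ) + (p.2 : ℕ) ≠ (q.1 : ℕ) + (q.2 : ℕ) then 0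
    else if (p.1 : ℕ) + (p.2 : ℕ) = 0 then b0
    else if (p.1 : ℕ) + (p.2 : ℕ) = 1 then B1 (f1 p) (f1 q)
    else if (p.1 : ℕ) + (p.2 : ℕ) = 2 then B2 (f2 p) (f2 q)
    else if (p.1 : ℕ) + (p.2 : ℕ) = 3 then B3 (f3 p) (f3 q)
    else b4

def T (c d x3 : ℂ) : Fin 3 → Fin 3 → Fin 3 → Fin 3 → ℂ :=
  ![![![![1, 0, 0], ![0, 0, 0], ![0, 0, 0]],
     ![![0, 0, 0], ![c, 0, 0], ![0, 0, 0]],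
     ![![0, 0, 0], ![0, 0, 0], ![c^2, 0, 0]]],
   ![![![0, d*c, 0], ![1 - d*c*c, 0, 0], ![0, 0, 0]],
     ![![0, 0, x3], ![0, 1, 0], ![-(x3*c^2), 0, 0]],
     ![![0, 0, 0], ![0, 0, 0], ![0, c, 0]]],
   ![![![0, 0, d], ![0, 0, 0], ![1 - d*c*c, 0, 0]],
     ![![0, 0, 0], ![0, 0, d*c], ![0, 1 - d*c*c, 0]],
     ![![0, 0, 0], ![0, 0, 0], ![0, 0, 1]]]]

set_option maxHeartbeats 1000000 in
lemma hT (c d x3 : ℂ) (p q : Fin 3 × Fin 3) :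
    blockR 1 !![1 - d * c * c, d * c; c, 0]
      !![1 - d * c * c, 0, d; -x3 * c ^ 2, 1, x3; c ^ 2, 0, 0]
      !![1 - d * c * c, d * c; c, 0] 1 p q = T c d x3 p.1 p.2 q.1 q.2 := by
  obtain ⟨p1, p2⟩ := p; obtain ⟨q1, q2⟩ := q
  fin_cases p1 <;> fin_cases p2 <;> fin_cases q1 <;> fin_cases q2 <;>
    simp [blockR, f1, f2, f3, T, Prod.ext_iff, Prod.fst_one, Prod.snd_one, Fin.ext_iff, Matrix.vecHead, Matrix.vecTail] <;> ring

lemma step1 (X Y : Matrix (Fin 3 × Fin 3) (Fin 3 × Fin 3) ℂ) (p q : Fin 3 × Fin 3 × Fin 3) :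
    (R1 X * R2 Y) p q
      = ∑ u : Fin 3, X (p.1, p.2.1) (q.1, u) * Y (u, p.2.2) (q.2.1, q.2.2) := by
  rw [Matrix.mul_apply]
  rw [Fintype.sum_prod_type]
  simp only [R1, R2, Fintype.sum_prod_type, mul_ite, ite_mul, mul_zero, zero_mul, mul_one,
    one_mul, Finset.sum_ite_irrel, Finset.sum_const_zero, Finset.sum_ite_eq, Finset.sum_ite_eq',
    Finset.mem_univ, if_true]

lemma tripleL (X Y Z : Matrix (Fin 3 × Fin 3) (Fin 3 × Fin 3) ℂ) (p q : Fin 3 × Fin 3 × Fin 3) :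
    (R1 X * R2 Y * R1 Z) p q
      = ∑ a : Fin 3, ∑ b : Fin 3, ∑ u : Fin 3,
          X (p.1, p.2.1) (a, u) * Y (u, p.2.2) (b, q.2.2) * Z (a, b) (q.1, q.2.1) := by
  rw [Matrix.mul_apply, Fintype.sum_prod_type]
  simp only [step1, R1, Fintype.sum_prod_type, mul_ite, ite_mul, mul_zero, zero_mul, mul_one,
    one_mul, Finset.sum_mul, Finset.mul_sum, Finset.sum_ite_irrel, Finset.sum_const_zero,
    Finset.sum_ite_eq, Finset.sum_ite_eq', Finset.mem_univ, if_true]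

lemma step2 (X Y : Matrix (Fin 3 × Fin 3) (Fin 3 × Fin 3) ℂ) (p q : Fin 3 × Fin 3 × Fin 3) :
    (R2 X * R1 Y) p q
      = ∑ u : Fin 3, X (p.2.1, p.2.2) (u, q.2.2) * Y (p.1, u) (q.1, q.2.1) := by
  rw [Matrix.mul_apply]
  rw [Fintype.sum_prod_type]
  simp only [R1, R2, Fintype.sum_prod_type, mul_ite, ite_mul, mul_zero, zero_mul, mul_one,
    one_mul, Finset.sum_ite_irrel, Finset.sum_const_zero, Finset.sum_ite_eq, Finset.sum_ite_eq',
    Finset.mem_univ, if_true]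

lemma tripleR (X Y Z : Matrix (Fin 3 × Fin 3) (Fin 3 × Fin 3) ℂ) (p q : Fin 3 × Fin 3 × Fin 3) :
    (R2 X * R1 Y * R2 Z) p q
      = ∑ a : Fin 3, ∑ b : Fin 3, ∑ u : Fin 3,
          X (p.2.1, p.2.2) (u, b) * Y (p.1, u) (q.1, a) * Z (a, b) (q.2.1, q.2.2) := by
  rw [Matrix.mul_apply, Fintype.sum_prod_type]
  simp only [step2, R2, Fintype.sum_prod_type, mul_ite, ite_mul, mul_zero, zero_mul, mul_one,
    one_mul, Finset.sum_mul, Finset.mul_sum, Finset.sum_ite_irrel, Finset.sum_const_zero,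
    Finset.sum_ite_eq, Finset.sum_ite_eq', Finset.mem_univ, if_true]


lemma fm0 (h : 0 < 3) : (⟨0, h⟩ : Fin 3) = 0 := rfl
lemma fm1 (h : 1 < 3) : (⟨1, h⟩ : Fin 3) = 1 := rfl
lemma fm2 (h : 2 < 3) : (⟨2, h⟩ : Fin 3) = 2 := rfl


set_option maxHeartbeats 10000000 in
/-- solution 5.4.a satisfies the braid relation. -/
theorem sol54a_braid (b c x3 : ℂ) (hbc : b * c ≠ 0) :
    Braid (blockR 1 !![1 - b * c, b; c, 0]
      !![1 - b * c, 0, b / c; -x3 * c ^ 2, 1, x3; c ^ 2, 0, 0]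
      !![1 - b * c, b; c, 0] 1) := by
  have hc : c ≠ 0 := fun h => hbc (by rw [h, mul_zero])
  obtain ⟨d, rfl⟩ : ∃ d, b = d * c := ⟨b / c, (div_mul_cancel₀ b hc).symm⟩
  rw [show d * c / c = d from mul_div_cancel_right₀ d hc]
  unfold Braid
  ext p q
  obtain ⟨i, j, k⟩ := p; obtain ⟨l, m, n⟩ := q
  rw [tripleL, tripleR]
  simp only [hT]
  simp only [Fin.sum_univ_three]
  fin_cases i <;> fin_cases j <;> fin_cases k <;> fin_cases l <;> fin_cases m <;> fin_cases n <;>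
  · simp only [fm0, fm1, fm2, T, Matrix.cons_val_zero, Matrix.cons_val_one, Matrix.cons_val_two,
      Matrix.head_cons, Matrix.tail_cons, zero_mul, mul_zero, zero_add, add_zero,
      one_mul, mul_one, neg_zero]
    try ring
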